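/- Let K be a field of characteristic zero, let 𝔤 be a Lie algebra over K, and let V be a Lie module over 𝔤. Suppose given a family (𝔤_k)_{k ∈ ℤ} of K-subspaces of 𝔤 whose internal direct sum is 𝔤, and a family (V_m)_{m ∈ ℤ} of K-subspaces of V whose internal direct sum is V, such that ⁅x, w⁆ ∈ V_{k+m} for all k, m ∈ ℤ, x ∈ 𝔤_k, w ∈ V_m. Suppose furthermore that 𝔤' is a K-subspace of 𝔤 and h ∈ 𝔤₀ is an element such that 𝔤₀ = 𝔤' + K·h and ⁅h, w⁆ = m • w for every m ∈ ℤ and w ∈ V_m. Then for every m ∈ ℤ and v ∈ V_m, the set {⁅x, v⁆ : x ∈ 𝔤} ∩ V_m is contained in {⁅x, v⁆ : x ∈ 𝔤'} + K·v. -/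

import Mathlib

set_option synthInstance.maxHeartbeats 1000000 in
set_option maxHeartbeats 1000000 in
/-- Refined key step in the proof that `X ∩ ℙ(V_m)` is a union of transversal-group
orbits: for a ℤ-graded Lie algebra `L = ⊕ₖ gₖ` over a field of characteristic zero
acting compatibly on a ℤ-graded module `M = ⊕ₘ Vₘ`, if `g₀ = g' + K·h` with `h` acting
on `Vₘ` as multiplication by `m`, then for every `v ∈ Vₘ` the set
`{⁅x, v⁆ : x ∈ L} ∩ Vₘ` is contained in `{⁅x, v⁆ : x ∈ g'} + K·v`. -/
theorem stmt_12 (K : Type*) [Field K] [CharZero K]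
    (L : Type*) [LieRing L] [LieAlgebra K L]
    (M : Type*) [AddCommGroup M] [Module K M] [LieRingModule L M] [LieModule K L M]
    (g : ℤ → Submodule K L) (hg : DirectSum.IsInternal g)
    (V : ℤ → Submodule K M) (hV : DirectSum.IsInternal V)
    (hcompat : ∀ (k m : ℤ) (x : L) (w : M), x ∈ g k → w ∈ V m → ⁅x, w⁆ ∈ V (k + m))
    (g' : Submodule K L) (h : L) (hh : h ∈ g 0)
    (hsum : g 0 = g' ⊔ Submodule.span K {h})
    (hact : ∀ (m : ℤ) (w : M), w ∈ V m → ⁅h, w⁆ = (m : ℤ) • w) :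
    ∀ (m : ℤ) (v : M), v ∈ V m →
      {w : M | ∃ x : L, ⁅x, v⁆ = w} ∩ (V m : Set M) ⊆
        {w : M | ∃ x ∈ g', ∃ c : K, w = ⁅x, v⁆ + c • v} := by
  intro m v hv w hw
  obtain ⟨⟨x, hxw⟩, hwm⟩ := hw
  obtain ⟨d, hd⟩ := hg.surjective x
  classical
  -- x as a sum
  have hx : x = ∑ k ∈ d.support, (d k : L) := by
    rw [← hd]
    conv_lhs => rw [← DirectSum.sum_support_of d]
    rw [map_sum]
    exact Finset.sum_congr rfl fun k _ => DirectSum.coeAddMonoidHom_of _ _ _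
  have h0 : ⁅(d 0 : L), v⁆ ∈ V m := by
    have := hcompat 0 m (d 0) v (d 0).2 hv
    rwa [zero_add] at this
  -- key: w = ⁅d 0, v⁆
  set D : DirectSum ℤ (fun i => ↥(V i)) := DirectSum.of (fun i => V i) m ⟨⁅(d 0 : L), v⁆, h0⟩ +
      ∑ k ∈ d.support.erase 0, DirectSum.of (fun i => V i) (k + m)
        ⟨⁅(d k : L), v⁆, hcompat k m (d k) v (d k).2 hv⟩ with hD
  have hDcoe : DirectSum.coeAddMonoidHom V D = w := by
    rw [hD, map_add, map_sum, DirectSum.coeAddMonoidHom_of]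
    have : ∀ k ∈ d.support.erase 0,
        DirectSum.coeAddMonoidHom V (DirectSum.of (fun i => V i) (k + m)
          ⟨⁅(d k : L), v⁆, hcompat k m (d k) v (d k).2 hv⟩) = ⁅(d k : L), v⁆ :=
      fun k _ => DirectSum.coeAddMonoidHom_of _ _ _
    have hsum_lie : ∀ (s : Finset ℤ), ⁅∑ k ∈ s, (d k : L), v⁆
        = ∑ k ∈ s, ⁅(d k : L), v⁆ := by
      intro s
      induction s using Finset.cons_induction with
      | empty => simp
      | cons a s ha ih => rw [Finset.sum_cons, Finset.sum_cons, add_lie, ih]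
    rw [Finset.sum_congr rfl this, ← hxw, hx, hsum_lie]
    show ⁅(d 0 : L), v⁆ + _ = _
    by_cases h0s : (0 : ℤ) ∈ d.support
    · rw [← Finset.add_sum_erase _ _ h0s]
    · rw [Finset.erase_eq_of_notMem h0s]
      have : (d 0 : L) = 0 := by
        simpa using DFinsupp.notMem_support_iff.mp h0s
      rw [this, zero_lie, zero_add]
  have hDw : D = DirectSum.of (fun i => V i) m ⟨w, hwm⟩ := by
    apply hV.injective
    rw [hDcoe, DirectSum.coeAddMonoidHom_of]
  have hwd : w = ⁅(d 0 : L), v⁆ := by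
    have := congrArg (fun z : DirectSum ℤ (fun i => ↥(V i)) => (z m : M)) hDw
    simp only [hD] at this
    rw [DirectSum.of_eq_same] at this
    have hzero : ∀ k ∈ d.support.erase 0,
        ((DirectSum.of (fun i => V i) (k + m)
          ⟨⁅(d k : L), v⁆, hcompat k m (d k) v (d k).2 hv⟩) m : M) = 0 := by
      intro k hk
      have hkne : k + m ≠ m := by
        have := Finset.ne_of_mem_erase hk
        omega
      rw [DirectSum.of_eq_of_ne _ _ _ hkne.symm]
      rfl
    simp only [DirectSum.add_apply, Submodule.coe_add, DirectSum.of_eq_same] at this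
    rw [show ((∑ k ∈ d.support.erase 0, DirectSum.of (fun i => V i) (k + m)
          ⟨⁅(d k : L), v⁆, hcompat k m (d k) v (d k).2 hv⟩) m : M) = 0 by
        rw [DFinsupp.finset_sum_apply]
        push_cast
        exact Finset.sum_eq_zero hzero] at this
    rw [add_zero] at this
    exact this.symm
  -- decompose d 0
  have hd0 : (d 0 : L) ∈ g' ⊔ Submodule.span K {h} := by
    rw [← hsum]; exact (d 0).2
  obtain ⟨x', hx', y, hy, hxy⟩ := Submodule.mem_sup.mp hd0
  obtain ⟨c, rfl⟩ := Submodule.mem_span_singleton.mp hy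
  refine ⟨x', hx', c * (m : K), ?_⟩
  rw [hwd, ← hxy, add_lie, smul_lie, hact m v hv, mul_smul]
  congr 1
  rw [Int.cast_smul_eq_zsmul]
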